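/- arXiv:2005.02448 — 3 statements merged into one kernel-verified Lean document; each statement's English description precedes it below -/
import Mathlib

section
/- Let q be a prime power, n a positive integer with gcd(n,q)=1, and let x^n - 1 = p_1 p_2 ... p_r be the factorization of x^n - 1 into monic irreducible factors over F_q. Let τ denote the Frobenius map α ↦ α^q on F_{q^n}, and for each l let W_l = {α ∈ F_{q^n} : p_l(τ)(α) = 0}. Then F_{q^n} = W_1 ⊕ ... ⊕ W_r as F_q-vector spaces, and each W_l has dimension deg p_l over F_q. -/
open Polynomial Module DirectSum
open scoped Function
private lemma ker_aeval_finset_prod {K M ι : Type*} [Field K] [AddCommGroup M] [Module K M]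
    (f : M →ₗ[K] M) (P : ι → K[X]) (hcp : Pairwise (IsCoprime on P)) (s : Finset ι) :
    LinearMap.ker (aeval f (∏ l ∈ s, P l)) = ⨆ l ∈ s, LinearMap.ker (aeval f (P l)) := by
  classical
  induction s using Finset.induction_on with
  | empty => simp [Module.End.one_eq_id]
  | @insert a s ha ih =>
    have hco : IsCoprime (P a) (∏ l ∈ s, P l) :=
      IsCoprime.prod_right fun i hi => hcp (fun h => ha (h ▸ hi))
    rw [Finset.prod_insert ha, ← Polynomial.sup_ker_aeval_eq_ker_aeval_mul_of_coprime f hco,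
      ih, Finset.iSup_insert]

/-- Semaev decomposition: with `x^n - 1 = p_1 ⋯ p_r` the factorization into monic
irreducibles over `F_q`, the kernels `W_l` of `p_l(τ)` (τ the Frobenius `α ↦ α^q`)
give an internal direct sum decomposition of `F_{q^n}`, with `dim W_l = deg p_l`. -/
theorem stmt_0 (K L : Type) [Field K] [Fintype K] [Field L] [Algebra K L]
    (q n r : ℕ) (hq : Fintype.card K = q) (hn : 0 < n)
    (hrank : Module.finrank K L = n) (hcop : Nat.Coprime n q)
    (P : Fin r → Polynomial K)
    (hmonic : ∀ l, (P l).Monic) (hirr : ∀ l, Irreducible (P l))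
    (hprod : ∏ l, P l = X ^ n - 1) :
    ∃ W : Fin r → Submodule K L,
      (∀ l, (W l : Set L) =
        {α : L | ∑ i ∈ Finset.range ((P l).natDegree + 1), (P l).coeff i • α ^ q ^ i = 0}) ∧
      DirectSum.IsInternal W ∧
      ∀ l, Module.finrank K (W l) = (P l).natDegree := by
  classical
  have hq2 : 1 < q := hq ▸ Fintype.one_lt_card
  -- characteristic
  set p := ringChar K with hpdef
  haveI : CharP K p := ringChar.charP K
  have hp : p.Prime := CharP.char_is_prime K p
  obtain ⟨k, -, hcard⟩ := FiniteField.card K p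
  rw [hq] at hcard
  haveI : CharP L p := charP_of_injective_algebraMap (algebraMap K L).injective p
  haveI : ExpChar L p := ExpChar.prime hp
  -- finiteness of L
  haveI : FiniteDimensional K L := FiniteDimensional.of_finrank_pos (hrank ▸ hn)
  haveI : Finite L := Module.finite_of_finite K
  haveI : Fintype L := Fintype.ofFinite L
  have hqn : Fintype.card L = q ^ n := by
    rw [card_eq_pow_finrank (K := K) (V := L), hq, hrank]
  -- the Frobenius τ as a K-linear endomorphism of L
  let τ : L →ₗ[K] L :=
    { toFun := fun x => x ^ q
      map_add' := fun x y => by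
        have := map_add (iterateFrobenius L p k) x y
        simpa only [iterateFrobenius_def, ← hcard] using this
      map_smul' := fun c x => by
        simp only [RingHom.id_apply, _root_.smul_pow]
        rw [← hq, FiniteField.pow_card] }
  have hτ : ∀ x : L, τ x = x ^ q := fun _ => rfl
  have hτpow : ∀ (i : ℕ) (x : L), (τ ^ i) x = x ^ q ^ i := by
    intro i
    induction i with
    | zero => intro x; simp
    | succ i ih =>
      intro x
      rw [pow_succ, Module.End.mul_apply, hτ, ih, ← pow_mul, ← pow_succ']
  have haeval : ∀ (g : K[X]) (x : L),
      aeval τ g x = ∑ i ∈ Finset.range (g.natDegree + 1), g.coeff i • x ^ q ^ i := by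
    intro g x
    rw [aeval_eq_sum_range]
    simp only [LinearMap.coe_sum, Finset.sum_apply, LinearMap.smul_apply, hτpow]
  set W : Fin r → Submodule K L := fun l => LinearMap.ker (aeval τ (P l)) with hW
  -- the defining set equality
  have hsets : ∀ l, (W l : Set L) =
      {α : L | ∑ i ∈ Finset.range ((P l).natDegree + 1), (P l).coeff i • α ^ q ^ i = 0} := by
    intro l
    ext x
    simp only [SetLike.mem_coe, hW, LinearMap.mem_ker, Set.mem_setOf_eq, haeval]
  -- τ is annihilated by X^n - 1
  have hann : aeval τ ((X : K[X]) ^ n - 1) = 0 := by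
    ext x
    simp only [map_sub, map_one, map_pow, aeval_X, LinearMap.sub_apply, Module.End.one_apply,
      LinearMap.zero_apply, hτpow]
    rw [← hqn, FiniteField.pow_card, sub_self]
  -- squarefreeness of X^n - 1 and pairwise coprimality
  have hpq : p ∣ q := hcard ▸ dvd_pow_self p k.pos.ne'
  have hnK : (n : K) ≠ 0 := by
    rw [Ne, CharP.cast_eq_zero_iff K p n]
    intro hpn
    have h1 : p ∣ 1 := hcop ▸ Nat.dvd_gcd hpn hpq
    exact hp.one_lt.ne' (Nat.dvd_one.mp h1)
  have hsq : Squarefree ((X : K[X]) ^ n - 1) := by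
    have h := Polynomial.separable_X_pow_sub_C (1 : K) hnK one_ne_zero
    rw [map_one] at h
    exact h.squarefree
  have hinj : Function.Injective P := by
    intro l m hlm
    by_contra hne
    have hmem : m ∈ Finset.univ.erase l := Finset.mem_erase.2 ⟨fun h => hne h.symm, Finset.mem_univ m⟩
    have h1 : P l * P l ∣ ∏ j, P j := by
      nth_rewrite 2 [hlm]
      rw [← Finset.mul_prod_erase _ _ (Finset.mem_univ l)]
      exact mul_dvd_mul_left _ (Finset.dvd_prod_of_mem _ hmem)
    rw [hprod] at h1
    exact (hirr l).not_isUnit (hsq _ h1)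
  have hpair : Pairwise (IsCoprime on P) := by
    intro l m hlm
    refine isCoprime_of_irreducible_dvd (fun h => (hirr l).ne_zero h.1) ?_
    intro d hd hdl hdm
    have hassoc : Associated (P l) (P m) :=
      ((hd.associated_of_dvd (hirr l) hdl).symm.trans (hd.associated_of_dvd (hirr m) hdm))
    exact hlm (hinj (Polynomial.eq_of_monic_of_associated (hmonic l) (hmonic m) hassoc))
  have hker := ker_aeval_finset_prod τ P hpair
  -- iSup = ⊤
  have htop : ⨆ l, W l = ⊤ := by
    have h := (hker Finset.univ).symm
    rw [hprod, hann, LinearMap.ker_zero] at h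
    simpa using h
  -- independence
  have hindep : iSupIndep W := by
    intro l
    have hco : IsCoprime (P l) (∏ m ∈ Finset.univ.erase l, P m) :=
      IsCoprime.prod_right fun m hm => hpair (Finset.ne_of_mem_erase hm).symm
    have hd := Polynomial.disjoint_ker_aeval_of_isCoprime τ hco
    rw [hker] at hd
    refine hd.mono_right (iSup_le fun m => iSup_le fun hm => ?_)
    exact le_iSup₂ (f := fun m (_ : m ∈ Finset.univ.erase l) => W m) m
      (Finset.mem_erase.2 ⟨hm, Finset.mem_univ m⟩)
  have hInt : DirectSum.IsInternal W :=
    (DirectSum.isInternal_submodule_iff_iSupIndep_and_iSup_eq_top W).mpr ⟨hindep, htop⟩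
  -- dimension count
  have hsum : ∑ l, finrank K (W l) = n := by
    have e : (DirectSum (Fin r) fun l => W l) ≃ₗ[K] L :=
      LinearEquiv.ofBijective (DirectSum.coeLinearMap W) hInt
    rw [← Module.finrank_directSum, e.finrank_eq, hrank]
  have hdegsum : ∑ l, (P l).natDegree = n := by
    rw [← natDegree_prod _ _ (fun l _ => (hmonic l).ne_zero), hprod,
      show (1 : K[X]) = C 1 by rw [map_one], natDegree_X_pow_sub_C]
  have hle : ∀ l, finrank K (W l) ≤ (P l).natDegree := by
    intro l
    set d := (P l).natDegree with hd
    set F : L[X] := ∑ i ∈ Finset.range (d + 1),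
      C (algebraMap K L ((P l).coeff i)) * X ^ q ^ i with hF
    have hFcoeff : F.coeff (q ^ d) = 1 := by
      rw [hF, finset_sum_coeff]
      have hterm : ∀ i ∈ Finset.range (d + 1),
          (C (algebraMap K L ((P l).coeff i)) * X ^ q ^ i).coeff (q ^ d) =
            if i = d then 1 else 0 := by
        intro i hi
        rw [coeff_C_mul, coeff_X_pow]
        rcases eq_or_ne i d with h | h
        · subst h
          simp [hd, (hmonic l).coeff_natDegree]
        · have hne : q ^ d ≠ q ^ i := fun hh => h (Nat.pow_right_injective hq2 hh).symm
          rw [if_neg hne, if_neg h, mul_zero]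
      rw [Finset.sum_congr rfl hterm, Finset.sum_ite_eq' _ d,
        if_pos (Finset.mem_range.2 (Nat.lt_succ_self d))]
    have hFne : F ≠ 0 := fun h => by simp [h] at hFcoeff
    have hFdeg : F.natDegree ≤ q ^ d := by
      refine natDegree_sum_le_of_forall_le _ _ fun i hi => ?_
      refine (natDegree_C_mul_le _ _).trans ?_
      rw [natDegree_X_pow]
      exact Nat.pow_le_pow_right (le_of_lt hq2) (Nat.lt_succ_iff.mp (Finset.mem_range.mp hi))
    have hroot : ∀ x : L, x ∈ W l → x ∈ F.roots.toFinset := by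
      intro x hx
      rw [Multiset.mem_toFinset, mem_roots hFne]
      have hx0 : ∑ i ∈ Finset.range (d + 1), (P l).coeff i • x ^ q ^ i = 0 := by
        have := hx
        rw [hW] at this
        rw [LinearMap.mem_ker] at this
        rw [haeval] at this
        exact this
      rw [hF, IsRoot.def, eval_finset_sum]
      rw [← hx0]
      refine Finset.sum_congr rfl fun i hi => ?_
      rw [eval_mul, eval_C, eval_pow, eval_X, Algebra.smul_def]
    have hcardle : Fintype.card (W l) ≤ q ^ d := by
      have hinj2 : Function.Injective
          (fun x : W l => (⟨(x : L), hroot x x.2⟩ : {y // y ∈ F.roots.toFinset})) := by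
        intro a b hab
        have h2 := congrArg (Subtype.val (p := fun y => y ∈ F.roots.toFinset)) hab
        exact Subtype.ext h2
      calc Fintype.card (W l) ≤ Fintype.card {y // y ∈ F.roots.toFinset} :=
            Fintype.card_le_of_injective _ hinj2
        _ = F.roots.toFinset.card := Fintype.card_coe _
        _ ≤ Multiset.card F.roots := Multiset.toFinset_card_le _
        _ ≤ F.natDegree := Polynomial.card_roots' F
        _ ≤ q ^ d := hFdeg
    have hcardW : Fintype.card (W l) = q ^ finrank K (W l) := by
      rw [card_eq_pow_finrank (K := K) (V := W l), hq]
    rw [hcardW] at hcardle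
    exact (Nat.pow_le_pow_iff_right hq2).mp hcardle
  have heq : ∀ l ∈ Finset.univ, finrank K (W l) = (P l).natDegree :=
    (Finset.sum_eq_sum_iff_of_le fun l _ => hle l).mp (by rw [hsum, hdegsum])
  exact ⟨W, hsets, hInt, fun l => heq l (Finset.mem_univ l)⟩
end

section
/- Let q be a prime power, n a positive integer with gcd(n,q)=1, and x^n - 1 = p_1 ... p_r the irreducible factorization over F_q. With τ the Frobenius on F_{q^n} and W_l = ker p_l(τ), an element α ∈ F_{q^n} is normal over F_q if and only if, writing α = Σ_l α_l with α_l ∈ W_l, every component α_l is nonzero. -/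
open Polynomial Module

/-- Semaev criterion: with `x^n - 1 = p_1 ⋯ p_r` the irreducible factorization over `F_q`,
`τ` the Frobenius and `W_l = ker p_l(τ)`, an element `α = Σ α_l` (with `α_l ∈ W_l`) is
normal over `F_q` iff every component `α_l` is nonzero. -/
theorem stmt_1 (K L : Type) [Field K] [Fintype K] [Field L] [Algebra K L]
    (q n r : ℕ) (hq : Fintype.card K = q) (hn : 0 < n)
    (hrank : Module.finrank K L = n) (hcop : Nat.Coprime n q)
    (P : Fin r → Polynomial K)
    (hmonic : ∀ l, (P l).Monic) (hirr : ∀ l, Irreducible (P l))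
    (hprod : ∏ l, P l = X ^ n - 1)
    (W : Fin r → Submodule K L)
    (hW : ∀ l, (W l : Set L) =
      {α : L | ∑ i ∈ Finset.range ((P l).natDegree + 1), (P l).coeff i • α ^ q ^ i = 0})
    (hint : DirectSum.IsInternal W)
    (α : L) (comp : Fin r → L) (hcomp : ∀ l, comp l ∈ W l) (hsum : ∑ l, comp l = α) :
    (∃ bas : Basis (Fin n) K L, ∀ i : Fin n, bas i = α ^ q ^ (i : ℕ)) ↔
      ∀ l, comp l ≠ 0 := by
  classical
  -- characteristic setup
  set p := ringChar K with hpdef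
  haveI hcharK : CharP K p := ringChar.charP K
  have hp : p.Prime := CharP.char_is_prime K p
  haveI : Fact p.Prime := ⟨hp⟩
  obtain ⟨k, -, hqpk⟩ := FiniteField.card K p
  rw [hq] at hqpk
  haveI hcharL : CharP L p := charP_of_injective_algebraMap (algebraMap K L).injective p
  -- finite dimensionality and Fintype of L
  haveI hfd : FiniteDimensional K L := FiniteDimensional.of_finrank_pos (hrank ▸ hn)
  haveI : Finite L := Module.finite_of_finite K
  haveI : Fintype L := Fintype.ofFinite L
  have hcardL : Fintype.card L = q ^ n := by
    rw [card_eq_pow_finrank (K := K), hq, hrank]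
  -- Frobenius as a K-linear map
  have hKfix : ∀ c : K, c ^ q = c := fun c => by rw [← hq]; exact FiniteField.pow_card c
  let τ : L →ₗ[K] L :=
    { toFun := fun x => x ^ q
      map_add' := fun x y => by simp only [hqpk, add_pow_char_pow]
      map_smul' := fun c x => by
        simp only [Algebra.smul_def, mul_pow, RingHom.id_apply, ← map_pow, hKfix] }
  have hτ : ∀ x : L, τ x = x ^ q := fun _ => rfl
  have hτpow : ∀ (i : ℕ) (x : L), (τ ^ i) x = x ^ q ^ i := by
    intro i
    induction i with
    | zero => intro x; simp
    | succ i ih =>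
      intro x
      rw [pow_succ, Module.End.mul_apply, ih, hτ, ← pow_mul, pow_succ, mul_comm (q ^ i)]
  have haeval : ∀ (g : K[X]) (m : ℕ), g.natDegree < m → ∀ x : L,
      aeval τ g x = ∑ i ∈ Finset.range m, g.coeff i • x ^ q ^ i := by
    intro g m hm x
    rw [aeval_eq_sum_range' hm]
    simp [hτpow]
  have hWker : ∀ l, ∀ x : L, x ∈ W l ↔ aeval τ (P l) x = 0 := by
    intro l x
    have h1 : x ∈ W l ↔ x ∈ (W l : Set L) := Iff.rfl
    rw [h1, hW l, Set.mem_setOf_eq, ← haeval (P l) ((P l).natDegree + 1) (Nat.lt_succ_self _) x]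
  -- multiplication in the image of aeval
  have hker : ∀ (g h : K[X]) (x : L), aeval τ h x = 0 → aeval τ (g * h) x = 0 := by
    intro g h x hx
    rw [map_mul]
    show (aeval τ g) ((aeval τ h) x) = 0
    rw [hx, map_zero]
  -- squarefreeness of X^n - 1
  have hnK : (n : K) ≠ 0 := by
    intro h
    have hpn : p ∣ n := (CharP.cast_eq_zero_iff K p n).mp h
    have hpq : p ∣ q := hqpk ▸ dvd_pow_self p k.ne_zero
    have : p ∣ 1 := hcop ▸ Nat.dvd_gcd hpn hpq
    exact hp.one_lt.ne' (Nat.dvd_one.mp this)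
  have hsf : Squarefree (X ^ n - 1 : K[X]) := by
    have := (separable_X_pow_sub_C (1 : K) hnK one_ne_zero).squarefree
    rwa [map_one] at this
  -- the irreducible factors are pairwise distinct, hence coprime
  have hPne : ∀ l l', l ≠ l' → P l ≠ P l' := by
    intro l l' hne heq
    have h1 : P l' ∣ ∏ l'' ∈ Finset.univ.erase l, P l'' :=
      Finset.dvd_prod_of_mem _ (Finset.mem_erase.mpr ⟨Ne.symm hne, Finset.mem_univ _⟩)
    have h2 : P l * P l ∣ X ^ n - 1 := by
      rw [← hprod, ← Finset.mul_prod_erase _ _ (Finset.mem_univ l)]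
      exact mul_dvd_mul_left (P l) (heq ▸ h1)
    exact (hirr l).not_isUnit (hsf (P l) h2)
  have hcopP : ∀ l l', l ≠ l' → IsCoprime (P l) (P l') := by
    intro l l' hne
    rw [Irreducible.coprime_iff_not_dvd (hirr l)]
    intro hdvd
    exact hPne l l' hne
      (Polynomial.eq_of_monic_of_associated (hmonic l) (hmonic l')
        ((hirr l).associated_of_dvd (hirr l') hdvd))
  -- degrees
  have hdegP : ∀ l, 0 < (P l).natDegree := fun l => (hirr l).natDegree_pos
  have hdegsum : ∑ l, (P l).natDegree = n := by
    have h1 : (∏ l, P l).natDegree = n := by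
      rw [hprod, ← C_1, natDegree_X_pow_sub_C]
    rwa [natDegree_prod _ _ (fun l _ => (hmonic l).ne_zero)] at h1
  -- key annihilation lemma
  have hann : ∀ g : K[X], g.natDegree < n → aeval τ g α = 0 → (∀ l, comp l ≠ 0) → g = 0 := by
    intro g hdeg hg hne
    have hmem : ∀ l, aeval τ g (comp l) ∈ W l := by
      intro l
      rw [hWker]
      have h0 : aeval τ (P l) (comp l) = 0 := (hWker l _).mp (hcomp l)
      rw [← Module.End.mul_apply, ← map_mul, mul_comm]
      exact hker g (P l) _ h0
    have hcompg : ∀ l, aeval τ g (comp l) = 0 := by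
      have hsz : ∑ l, aeval τ g (comp l) = 0 := by
        rw [← map_sum, hsum, hg]
      intro l
      have hindep := hint.submodule_iSupIndep
      have h2 : aeval τ g (comp l) ∈ ⨆ (j) (_ : j ≠ l), W j := by
        have heq : aeval τ g (comp l)
            = -∑ l' ∈ Finset.univ.erase l, aeval τ g (comp l') := by
          have h3 := Finset.add_sum_erase Finset.univ
            (fun l' => aeval τ g (comp l')) (Finset.mem_univ l)
          rw [hsz] at h3
          exact eq_neg_of_add_eq_zero_left h3
        rw [heq]
        exact neg_mem (Submodule.sum_mem _ fun l' hl' =>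
          Submodule.mem_iSup_of_mem l'
            (Submodule.mem_iSup_of_mem (Finset.ne_of_mem_erase hl') (hmem l')))
      exact Submodule.disjoint_def.mp (hindep l) _ (hmem l) h2
    have hdvd : ∀ l, P l ∣ g := by
      intro l
      by_contra hndvd
      have hcop' : IsCoprime (P l) g := (Irreducible.coprime_iff_not_dvd (hirr l)).mpr hndvd
      obtain ⟨a, b, hab⟩ := hcop'
      apply hne l
      have h4 := congrArg (fun h : K[X] => aeval τ h (comp l)) hab
      simp only [map_add, map_one, LinearMap.add_apply, Module.End.one_apply] at h4
      have h5 : aeval τ (a * P l) (comp l) = 0 := hker a (P l) _ ((hWker l _).mp (hcomp l))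
      have h6 : aeval τ (b * g) (comp l) = 0 := hker b g _ (hcompg l)
      rw [h5, h6, zero_add] at h4
      exact h4.symm
    have hXn : (X ^ n - 1 : K[X]) ∣ g := by
      rw [← hprod]
      exact Finset.prod_dvd_of_coprime
        (fun l _ l' _ hne' => hcopP l l' hne')
        (fun l _ => hdvd l)
    by_contra hg0
    have h7 := Polynomial.natDegree_le_of_dvd hXn hg0
    rw [← C_1, natDegree_X_pow_sub_C] at h7
    omega
  constructor
  · rintro ⟨bas, hbas⟩ l hl0
    set g := ∏ l' ∈ Finset.univ.erase l, P l' with hgdef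
    have hgmonic : g.Monic := monic_prod_of_monic _ _ fun l' _ => hmonic l'
    have hgdeg : g.natDegree < n := by
      have h2 : g.natDegree = ∑ l' ∈ Finset.univ.erase l, (P l').natDegree :=
        natDegree_prod _ _ (fun l' _ => (hmonic l').ne_zero)
      have h3 := Finset.add_sum_erase Finset.univ
        (fun l' => (P l').natDegree) (Finset.mem_univ l)
      simp only [hdegsum] at h3
      have := hdegP l
      omega
    have hgα : aeval τ g α = 0 := by
      rw [← hsum, map_sum]
      apply Finset.sum_eq_zero
      intro l' _
      by_cases h : l' = l
      · rw [h, hl0, map_zero]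
      · obtain ⟨h', hh'⟩ : P l' ∣ g :=
          Finset.dvd_prod_of_mem _ (Finset.mem_erase.mpr ⟨h, Finset.mem_univ _⟩)
        rw [hh', mul_comm]
        exact hker h' (P l') _ ((hWker l' _).mp (hcomp l'))
    have hrel : ∑ i : Fin n, g.coeff (i : ℕ) • bas i = 0 := by
      have h8 := haeval g n hgdeg α
      rw [hgα] at h8
      simp only [hbas]
      rw [Fin.sum_univ_eq_sum_range (fun i => g.coeff i • α ^ q ^ i) n]
      exact h8.symm
    have hci := Fintype.linearIndependent_iff.mp bas.linearIndependent
      (fun i => g.coeff (i : ℕ)) hrel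
    have h9 := hci ⟨g.natDegree, hgdeg⟩
    simp only at h9
    rw [hgmonic.coeff_natDegree] at h9
    exact one_ne_zero h9
  · intro hne
    haveI : Nonempty (Fin n) := Fin.pos_iff_nonempty.mp hn
    have hli : LinearIndependent K (fun i : Fin n => α ^ q ^ (i : ℕ)) := by
      rw [Fintype.linearIndependent_iff]
      intro c hc i
      set g : K[X] := ∑ j : Fin n, Polynomial.monomial (j : ℕ) (c j) with hgdef
      have hcoeff : ∀ j : Fin n, g.coeff (j : ℕ) = c j := by
        intro j
        rw [hgdef, Polynomial.finset_sum_coeff]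
        rw [Finset.sum_eq_single j]
        · simp [Polynomial.coeff_monomial]
        · intro j' _ hj'
          rw [Polynomial.coeff_monomial, if_neg (fun h => hj' (Fin.val_injective h))]
        · intro h; exact absurd (Finset.mem_univ j) h
      have hgdeg : g.natDegree < n := by
        have h10 : g.natDegree ≤ n - 1 := by
          apply Polynomial.natDegree_sum_le_of_forall_le
          intro j _
          exact le_trans (Polynomial.natDegree_monomial_le (c j)) (by omega)
        omega
      have hgα : aeval τ g α = 0 := by
        rw [haeval g n hgdeg α,
          ← Fin.sum_univ_eq_sum_range (fun i => g.coeff i • α ^ q ^ i) n]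
        simp only [hcoeff]
        exact hc
      have hg0 : g = 0 := hann g hgdeg hgα hne
      have h11 := hcoeff i
      rw [hg0] at h11
      simpa using h11.symm
    refine ⟨basisOfLinearIndependentOfCardEqFinrank hli (by simp [hrank]), fun i => ?_⟩
    rw [coe_basisOfLinearIndependentOfCardEqFinrank]
end

section
/- Let A ∈ F_q^* have multiplicative order e, and let t ≥ 1. The polynomial x^t - A is irreducible over F_q if and only if: (i) gcd(t, (q-1)/e) = 1; (ii) every prime factor of t divides e; and (iii) if 4 | t then 4 | q - 1. -/
open Polynomial

section PowerSolve

variable {G : Type*} [Group G] [Finite G] [IsCyclic G]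

/-- In a finite cyclic group, solvability of `y ^ ℓ = x` for prime `ℓ`. -/
lemma prime_pow_solvable_iff {ℓ : ℕ} (hℓ : ℓ.Prime) (x : G) :
    (∀ y : G, y ^ ℓ ≠ x) ↔ (ℓ ∣ orderOf x ∧ ¬ ℓ ∣ Nat.card G / orderOf x) := by
  classical
  set n := Nat.card G with hn
  set e := orderOf x with he
  have hepos : 0 < e := orderOf_pos x
  have hedvd : e ∣ n := orderOf_dvd_natCard x
  obtain ⟨m, hm⟩ := hedvd
  have hme : n / e = m := by rw [hm, Nat.mul_div_cancel_left _ hepos]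
  rw [hme]
  constructor
  · -- if no solution then ℓ ∣ e and ℓ ∤ m
    intro hno
    by_contra hcon
    have hsol : ∃ y : G, y ^ ℓ = x := by
      by_cases hlm : ℓ ∣ m
      · -- use a generator
        obtain ⟨g, hg⟩ := IsCyclic.exists_generator (α := G)
        have hgo : orderOf g = n := orderOf_eq_card_of_forall_mem_zpowers hg
        obtain ⟨k, hk⟩ := (mem_powers_iff_mem_zpowers (x := g)).mpr (hg x)
        have hkx : g ^ k = x := hk
        have hord : e = n / n.gcd k := by
          rw [he, ← hkx, orderOf_pow, hgo]
        have hgcd : n.gcd k = m := by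
          have h1 : e * n.gcd k = n := by
            rw [hord, Nat.div_mul_cancel (Nat.gcd_dvd_left n k)]
          have := h1.trans hm
          exact Nat.eq_of_mul_eq_mul_left hepos this
        have hlk : ℓ ∣ k := hlm.trans (hgcd ▸ Nat.gcd_dvd_right n k)
        obtain ⟨j, hj⟩ := hlk
        exact ⟨g ^ j, by rw [← pow_mul, mul_comm, ← hj, hkx]⟩
      · -- then ℓ ∤ n, use powCoprime
        have hle : ¬ ℓ ∣ e := by
          intro hle; exact hcon ⟨hle, hlm⟩
        have hln : ¬ ℓ ∣ n := by
          rw [hm]; exact fun h => (hℓ.dvd_mul.mp h).elim hle hlm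
        have hcop : (Nat.card G).Coprime ℓ := by
          rw [← hn, Nat.coprime_comm]
          exact (Nat.Prime.coprime_iff_not_dvd hℓ).mpr hln
        obtain ⟨y, hy⟩ := (powCoprime hcop).surjective x
        exact ⟨y, hy⟩
    obtain ⟨y, hy⟩ := hsol
    exact hno y hy
  · -- if ℓ ∣ e and ℓ ∤ m then no solution
    rintro ⟨hle, hlm⟩ y hy
    set f := orderOf y with hf
    have hfx : e = f / f.gcd ℓ := by rw [he, ← hy, orderOf_pow]
    have hgd : f.gcd ℓ ∣ ℓ := Nat.gcd_dvd_right f ℓ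
    have h1 : e * f.gcd ℓ = f := by
      rw [hfx, Nat.div_mul_cancel (Nat.gcd_dvd_left f ℓ)]
    rcases (Nat.Prime.eq_one_or_self_of_dvd hℓ _ hgd) with hg1 | hgl
    · -- gcd = 1 : then e = f, but ℓ ∣ e = f so gcd = ℓ ≠ 1
      rw [hg1, mul_one] at h1
      have : f.gcd ℓ = ℓ := Nat.gcd_eq_right (h1 ▸ hle)
      rw [hg1] at this
      exact hℓ.ne_one this.symm
    · -- gcd = ℓ : f = e * ℓ, f ∣ n = e * m hence ℓ ∣ m
      rw [hgl] at h1
      have hfn : f ∣ n := orderOf_dvd_natCard y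
      rw [← h1, hm] at hfn
      exact hlm ((Nat.mul_dvd_mul_iff_left hepos).mp hfn)

end PowerSolve

section FieldSolve

variable {K : Type*} [Field K] [Fintype K]


lemma orderOf_dvd_card_sub_one {A : K} (hA : A ≠ 0) : orderOf A ∣ Fintype.card K - 1 := by
  have h1 : orderOf (Units.mk0 A hA) ∣ Nat.card Kˣ := orderOf_dvd_natCard _
  rwa [Nat.card_units, Nat.card_eq_fintype_card, ← orderOf_units, Units.val_mk0] at h1

lemma field_prime_pow_solvable_iff {ℓ : ℕ} (hℓ : ℓ.Prime) {A : K} (hA : A ≠ 0) :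
    (∀ b : K, b ^ ℓ ≠ A) ↔
      (ℓ ∣ orderOf A ∧ ¬ ℓ ∣ (Fintype.card K - 1) / orderOf A) := by
  have h1 : (∀ b : K, b ^ ℓ ≠ A) ↔ (∀ y : Kˣ, y ^ ℓ ≠ Units.mk0 A hA) := by
    constructor
    · intro h y hy
      apply h y
      have := congrArg (Units.val) hy
      simpa using this
    · intro h b hb
      have hb0 : b ≠ 0 := by
        rintro rfl
        exact hA (by simpa [hℓ.ne_zero] using hb.symm)
      apply h (Units.mk0 b hb0)
      ext
      simpa using hb
  rw [h1, prime_pow_solvable_iff hℓ, Nat.card_units, Nat.card_eq_fintype_card, ← orderOf_units, Units.val_mk0]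

end FieldSolve

section Arith

open Finset

lemma geom_sum_nat_eq {q : ℕ} (hq : 1 ≤ q) (p : ℕ) :
    (q - 1) * (∑ i ∈ range p, q ^ i) = q ^ p - 1 := by
  have : ((q : ℤ) - 1) * (∑ i ∈ range p, (q : ℤ) ^ i) = (q : ℤ) ^ p - 1 := by
    rw [mul_comm]; exact geom_sum_mul _ _
  have hqp : 1 ≤ q ^ p := Nat.one_le_pow _ _ hq
  zify [hq, hqp]
  push_cast at this ⊢
  linarith [this]

lemma S_not_dvd_ne {q ℓ p : ℕ} (hℓ : ℓ.Prime) (hp : p.Prime) (hne : ℓ ≠ p)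
    (hdvd : ℓ ∣ q - 1) (hq : 1 ≤ q) : ¬ ℓ ∣ ∑ i ∈ range p, q ^ i := by
  intro h
  haveI : NeZero ℓ := ⟨hℓ.ne_zero⟩
  obtain ⟨c, hc⟩ := hdvd
  have hqc : q = ℓ * c + 1 := by omega
  have hcast : ((∑ i ∈ range p, q ^ i : ℕ) : ZMod ℓ) = 0 :=
    (ZMod.natCast_eq_zero_iff _ _).mpr h
  have hq1 : (q : ZMod ℓ) = 1 := by
    rw [hqc]; push_cast; simp [ZMod.natCast_self]
  rw [Nat.cast_sum] at hcast
  simp only [Nat.cast_pow, hq1, one_pow, Finset.sum_const, card_range, nsmul_eq_mul, mul_one]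
    at hcast
  have : ℓ ∣ p := (ZMod.natCast_eq_zero_iff _ _).mp hcast
  exact hne ((Nat.prime_dvd_prime_iff_eq hℓ hp).mp this)

lemma one_add_mul_pow_zmod {R : Type*} [CommRing R] (x : R) (hx : x * x = 0) (i : ℕ) :
    (1 + x) ^ i = 1 + i * x := by
  induction i with
  | zero => simp
  | succ n ih =>
    have hx2 : x ^ 2 = 0 := by rw [sq]; exact hx
    rw [pow_succ, ih]
    ring_nf
    push_cast
    ring_nf
    rw [hx2]
    ring

lemma S_sq_not_dvd {q p : ℕ} (hp : p.Prime) (hdvd : p ∣ q - 1) (hq : 1 ≤ q)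
    (h4 : p = 2 → 4 ∣ q - 1) : ¬ p ^ 2 ∣ ∑ i ∈ range p, q ^ i := by
  obtain ⟨c, hc⟩ := hdvd
  have hqc : q = p * c + 1 := by omega
  by_cases hp2 : p = 2
  · subst hp2
    obtain ⟨d, hd⟩ := h4 rfl
    intro h
    have hS : ∑ i ∈ range 2, q ^ i = 1 + q := by
      simp [Finset.sum_range_succ]
    rw [hS] at h
    omega
  · -- p odd
    intro h
    haveI : NeZero (p^2) := ⟨pow_ne_zero 2 hp.ne_zero⟩
    have hodd : Odd p := hp.odd_of_ne_two hp2
    have hcast : ((∑ i ∈ range p, q ^ i : ℕ) : ZMod (p^2)) = 0 :=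
      (ZMod.natCast_eq_zero_iff _ _).mpr h
    have hp0 : ((p : ZMod (p^2)) * (p : ZMod (p^2))) = 0 := by
      have : (((p^2 : ℕ)) : ZMod (p^2)) = 0 := ZMod.natCast_self _
      push_cast at this
      rw [← this]; ring
    have hq1 : (q : ZMod (p^2)) = 1 + (p : ZMod (p^2)) * (c : ZMod (p^2)) := by
      rw [hqc]; push_cast; ring
    have hx0 : ((p : ZMod (p^2)) * (c : ZMod (p^2))) * ((p : ZMod (p^2)) * (c : ZMod (p^2))) = 0 := by
      calc ((p : ZMod (p^2)) * (c : ZMod (p^2))) * ((p : ZMod (p^2)) * (c : ZMod (p^2)))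
          = ((p : ZMod (p^2)) * (p : ZMod (p^2))) * ((c : ZMod (p^2)) * (c : ZMod (p^2))) := by ring
        _ = 0 := by rw [hp0, zero_mul]
    have hbin : ∀ i : ℕ, ((q : ZMod (p^2))) ^ i = 1 + (i : ZMod (p^2)) * ((p : ZMod (p^2)) * (c : ZMod (p^2))) := by
      intro i
      rw [hq1]
      exact one_add_mul_pow_zmod _ hx0 i
    rw [Nat.cast_sum] at hcast
    simp only [Nat.cast_pow] at hcast
    rw [Finset.sum_congr rfl (fun i _ => hbin i)] at hcast
    rw [Finset.sum_add_distrib, Finset.sum_const, ← Finset.sum_mul] at hcast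
    have hsum : (∑ i ∈ range p, (i : ZMod (p^2))) = ((p * ((p-1)/2) : ℕ) : ZMod (p^2)) := by
      rw [← Nat.cast_sum]
      congr 1
      rw [Finset.sum_range_id]
      obtain ⟨w, hw⟩ := hodd
      have : p - 1 = 2 * w := by omega
      rw [this]
      exact Nat.mul_div_assoc p ⟨w, rfl⟩
    rw [hsum] at hcast
    push_cast at hcast
    -- now hcast : p + (p * ((p-1)/2)) * (p * c) = 0 in ZMod p², and p*p = 0
    have : (p : ZMod (p^2)) = 0 := by
      have h2 : ((p:ZMod (p^2)) * ((((p-1)/2 : ℕ)) : ZMod (p^2))) * ((p: ZMod (p^2)) * (c : ZMod (p^2))) = 0 := by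
        have : ((p:ZMod (p^2)) * ((((p-1)/2 : ℕ)) : ZMod (p^2))) * ((p: ZMod (p^2)) * (c : ZMod (p^2)))
            = ((p : ZMod (p^2)) * (p : ZMod (p^2))) * ((((p-1)/2 : ℕ) : ZMod (p^2)) * (c : ZMod (p^2))) := by ring
        rw [this, hp0, zero_mul]
      simp only [Finset.card_range, nsmul_eq_mul, mul_one] at hcast
      rw [h2] at hcast
      simpa using hcast
    have hdp : (p^2 : ℕ) ∣ p := (ZMod.natCast_eq_zero_iff _ _).mp this
    have := Nat.le_of_dvd hp.pos hdp
    nlinarith [hp.two_le]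

end Arith

section Key

open Finset

lemma key_not_dvd {q ℓ p e m : ℕ} (hq : 2 ≤ q) (hℓ : ℓ.Prime) (hp : p.Prime)
    (hem : q - 1 = e * m) (hle : ℓ ∣ e) (hlm : ¬ ℓ ∣ m) (hpe : p * e ∣ q ^ p - 1)
    (h4 : ℓ = p → p = 2 → 4 ∣ q - 1) :
    ¬ ℓ ∣ (q ^ p - 1) / (p * e) := by
  intro h
  have hdvd : (p * e) * ℓ ∣ q ^ p - 1 := (Nat.dvd_div_iff_mul_dvd hpe).mp h
  set S := ∑ i ∈ range p, q ^ i with hS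
  have hqS : q ^ p - 1 = (q - 1) * S := (geom_sum_nat_eq (by omega) p).symm
  have he0 : e ≠ 0 := by rintro rfl; simp at hem; omega
  have hm0 : m ≠ 0 := by rintro rfl; simp at hem; omega
  have hq10 : q - 1 ≠ 0 := by omega
  have hqp0 : q ^ p - 1 ≠ 0 := by
    have : q ≤ q ^ p := Nat.le_self_pow hp.ne_zero q
    omega
  have hS0 : S ≠ 0 := by
    intro h0
    rw [hqS, h0, mul_zero] at hqp0
    exact hqp0 rfl
  have hedvd : e ∣ q - 1 := Dvd.intro m hem.symm
  have hfac := (Nat.factorization_le_iff_dvd (by simp [hp.ne_zero, he0, hℓ.ne_zero]) hqp0).mpr hdvd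
  have hineq := hfac ℓ
  rw [hqS] at hineq
  rw [Nat.factorization_mul (mul_ne_zero hp.ne_zero he0) hℓ.ne_zero,
      Nat.factorization_mul hp.ne_zero he0,
      Nat.factorization_mul hq10 hS0, hem,
      Nat.factorization_mul he0 hm0] at hineq
  simp only [Finsupp.add_apply, Nat.Prime.factorization_self hℓ,
      Nat.factorization_eq_zero_of_not_dvd hlm] at hineq
  by_cases hcase : ℓ = p
  · subst hcase
    have h2 : 2 ≤ S.factorization ℓ := by
      have := Nat.Prime.factorization_self hℓ
      omega
    have : ℓ ^ 2 ∣ S := (Nat.Prime.pow_dvd_iff_le_factorization hℓ hS0).mpr h2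
    exact S_sq_not_dvd hℓ (hle.trans hedvd) (by omega) (h4 rfl) this
  · have hpl : p.factorization ℓ = 0 :=
      Nat.factorization_eq_zero_of_not_dvd
        (fun hd => hcase ((Nat.prime_dvd_prime_iff_eq hℓ hp).mp hd))
    have h1 : 1 ≤ S.factorization ℓ := by omega
    have : ℓ ∣ S := (Nat.Prime.dvd_iff_one_le_factorization hℓ hS0).mpr h1
    exact S_not_dvd_ne hℓ hp hcase (hle.trans hedvd) (by omega) this

end Key

section Quartic

variable {K : Type*} [Field K]

lemma not_irreducible_of_quartic (b : K) {u : ℕ} (hu : u ≠ 0) :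
    ¬ Irreducible ((X : K[X]) ^ (4 * u) - C (-4 * b ^ 4)) := by
  set p₁ : K[X] := X ^ 2 + C (2 * b) * X + C (2 * b ^ 2) with hp₁
  set p₂ : K[X] := X ^ 2 - C (2 * b) * X + C (2 * b ^ 2) with hp₂
  have hprod : p₁ * p₂ = X ^ 4 - C (-4 * b ^ 4) := by
    rw [hp₁, hp₂]
    ring_nf
    simp only [map_mul, map_pow, map_neg, map_ofNat, C_mul, C_pow]
    ring
  have hdeg1 : p₁.natDegree = 2 := by
    rw [hp₁]; compute_degree!
  have hdeg2 : p₂.natDegree = 2 := by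
    rw [hp₂]; compute_degree!
  have hXu : ((X : K[X]) ^ u).natDegree = u := natDegree_X_pow u
  have hfact : (X : K[X]) ^ (4 * u) - C (-4 * b ^ 4)
      = p₁.comp (X ^ u) * p₂.comp (X ^ u) := by
    rw [← mul_comp, hprod]
    simp [sub_comp, pow_comp, X_comp, C_comp, pow_mul, mul_comm 4 u]
  intro hirr
  rcases hirr.isUnit_or_isUnit hfact with h | h
  · have := natDegree_eq_zero_of_isUnit h
    rw [natDegree_comp, hdeg1, hXu] at this
    omega
  · have := natDegree_eq_zero_of_isUnit h
    rw [natDegree_comp, hdeg2, hXu] at this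
    omega

end Quartic

section Forward

variable {K : Type*} [Field K] [Fintype K]

lemma forward_conditions {A : K} (hA : A ≠ 0) {t : ℕ} (ht : 1 ≤ t)
    (H : Irreducible ((X : K[X]) ^ t - C A)) :
    Nat.Coprime t ((Fintype.card K - 1) / orderOf A) ∧
      (∀ ℓ : ℕ, ℓ.Prime → ℓ ∣ t → ℓ ∣ orderOf A) ∧
      (4 ∣ t → 4 ∣ Fintype.card K - 1) := by
  have key : ∀ ℓ : ℕ, ℓ.Prime → ℓ ∣ t →
      ℓ ∣ orderOf A ∧ ¬ ℓ ∣ (Fintype.card K - 1) / orderOf A := by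
    intro ℓ hℓ hdvd
    exact (field_prime_pow_solvable_iff hℓ hA).mp
      (fun b => pow_ne_of_irreducible_X_pow_sub_C H hdvd hℓ.ne_one b)
  refine ⟨?_, fun ℓ hℓ hd => (key ℓ hℓ hd).1, ?_⟩
  · by_contra hc
    obtain ⟨ℓ, hℓ, hdvd⟩ := Nat.exists_prime_and_dvd hc
    exact (key ℓ hℓ (hdvd.trans (Nat.gcd_dvd_left _ _))).2
      (hdvd.trans (Nat.gcd_dvd_right _ _))
  · intro h4
    by_contra hq4
    set q := Fintype.card K with hq
    have hqpos : 1 ≤ q := Fintype.card_pos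
    have h2t : 2 ∣ t := dvd_trans ⟨2, rfl⟩ h4
    have hnsq : ¬ IsSquare A := by
      rintro ⟨b, rfl⟩
      exact pow_ne_of_irreducible_X_pow_sub_C H h2t (by norm_num) b (sq b)
    by_cases hchar : ringChar K = 2
    · exact hnsq (FiniteField.isSquare_of_char_two hchar A)
    · -- odd characteristic, q ≡ 3 mod 4
      have hodd : q % 2 = 1 := FiniteField.odd_card_of_char_ne_two hchar
      have hq3 : q % 4 = 3 := by omega
      have hm1 : ¬ IsSquare (-1 : K) := by
        rw [FiniteField.isSquare_neg_one_iff]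
        omega
      have hm1' : (-1 : K) ^ (q / 2) = -1 := by
        rcases FiniteField.pow_dichotomy hchar (neg_ne_zero.mpr one_ne_zero) with h | h
        · exact absurd ((FiniteField.isSquare_iff hchar (neg_ne_zero.mpr one_ne_zero)).mpr h) hm1
        · exact h
      have hA' : A ^ (q / 2) = -1 := by
        rcases FiniteField.pow_dichotomy hchar hA with h | h
        · exact absurd ((FiniteField.isSquare_iff hchar hA).mpr h) hnsq
        · exact h
      have hsq : IsSquare (-A) := by
        rw [FiniteField.isSquare_iff hchar (neg_ne_zero.mpr hA)]
        rw [neg_eq_neg_one_mul, mul_pow, hm1', hA']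
        norm_num
      obtain ⟨c, hc⟩ := hsq
      have hc0 : c ≠ 0 := by
        rintro rfl
        rw [mul_zero, neg_eq_zero] at hc
        exact hA hc
      have h2ne : (2 : K) ≠ 0 := by
        intro h2
        exact hchar (CharP.ringChar_of_prime_eq_zero Nat.prime_two h2)
      set c' : K := c * (2 : K)⁻¹ with hc'
      have hc'0 : c' ≠ 0 := mul_ne_zero hc0 (inv_ne_zero h2ne)
      -- q - 1 = 2 * w with w odd
      set w := (q - 1) / 2 with hw
      have hw2 : q - 1 = 2 * w := by omega
      have hwodd : w % 2 = 1 := by omega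
      set b : K := c' ^ ((w + 1) / 2) with hb
      have hb4 : b ^ 4 = c' ^ 2 := by
        rw [hb, ← pow_mul]
        have harith : (w + 1) / 2 * 4 = (q - 1) + 2 := by omega
        rw [harith, pow_add, FiniteField.pow_card_sub_one_eq_one c' hc'0, one_mul]
      have hAb : A = -4 * b ^ 4 := by
        have hkey : -4 * b ^ 4 = -(c * c) := by
          rw [hb4, hc']
          field_simp
          ring
        rw [hkey, ← hc, neg_neg]
      obtain ⟨u, hu⟩ := h4
      have hu0 : u ≠ 0 := by rintro rfl; omega
      rw [hu, hAb] at H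
      exact not_irreducible_of_quartic b hu0 H

end Forward

section Backward

open IntermediateField

lemma orderOf_pos_of_ne_zero {K : Type*} [Field K] [Fintype K] {A : K} (hA : A ≠ 0) :
    0 < orderOf A := by
  rw [← Units.val_mk0 hA, orderOf_units]
  exact orderOf_pos _

lemma backward_irreducible :
    ∀ (t : ℕ) (K : Type) [Field K] [Fintype K], ∀ A : K, A ≠ 0 → 1 ≤ t →
      Nat.Coprime t ((Fintype.card K - 1) / orderOf A) →
      (∀ ℓ : ℕ, ℓ.Prime → ℓ ∣ t → ℓ ∣ orderOf A) →
      (4 ∣ t → 4 ∣ Fintype.card K - 1) →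
      Irreducible ((X : K[X]) ^ t - C A) := by
  intro t
  induction t using induction_on_primes with
  | zero => intro K _ _ A hA ht _ _ _; exact absurd ht (by omega)
  | one => intro K _ _ A hA ht _ _ _; simpa using irreducible_X_sub_C A
  | prime_mul p s hp IH =>
    intro K _K1 _K2 A hA ht hcop hprimes h4
    set q := Fintype.card K with hq
    set e := orderOf A with he
    have hqpos : 2 ≤ q := Fintype.one_lt_card
    have hepos : 0 < e := orderOf_pos_of_ne_zero hA
    have hedvd : e ∣ q - 1 := orderOf_dvd_card_sub_one hA
    obtain ⟨m, hm⟩ := hedvd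
    have hmdiv : (q - 1) / e = m := by rw [hm, Nat.mul_div_cancel_left _ hepos]
    have hpt : p ∣ p * s := dvd_mul_right p s
    have hpe : p ∣ e := hprimes p hp hpt
    have hnotdvd : ∀ ℓ : ℕ, ℓ.Prime → ℓ ∣ p * s → ¬ ℓ ∣ m := by
      intro ℓ hℓ hlt hdm
      have hg : Nat.gcd (p * s) ((q - 1) / e) = 1 := hcop
      have h1 : ℓ ∣ 1 := hg ▸ Nat.dvd_gcd hlt (hmdiv ▸ hdm)
      exact hℓ.ne_one (Nat.dvd_one.mp h1)
    have hs1 : 1 ≤ s := by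
      rcases Nat.eq_zero_or_pos s with h | h
      · subst h; simp at ht
      · exact h
    have hAnp : ∀ b : K, b ^ p ≠ A :=
      (field_prime_pow_solvable_iff hp hA).mpr
        ⟨hpe, by rw [hmdiv]; exact hnotdvd p hp hpt⟩
    have hirr_p : Irreducible ((X : K[X]) ^ p - C A) :=
      X_pow_sub_C_irreducible_of_prime hp hAnp
    rw [mul_comm p s]
    apply X_pow_mul_sub_C_irreducible hirr_p
    intro E _ _ x hx
    have hxint : IsIntegral K x := by
      by_contra hnot
      exact X_pow_sub_C_ne_zero hp.pos A (hx ▸ minpoly.eq_zero hnot)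
    haveI : FiniteDimensional K K⟮x⟯ := adjoin.finiteDimensional hxint
    haveI : Finite ↥K⟮x⟯ := Module.finite_of_finite K
    letI : Fintype ↥K⟮x⟯ := Fintype.ofFinite _
    set gen := AdjoinSimple.gen K x with hgendef
    have hxp : x ^ p = algebraMap K E A := by
      have h0 := minpoly.aeval K x
      rw [hx, map_sub, map_pow, aeval_X, aeval_C] at h0
      exact sub_eq_zero.mp h0
    have hgenp : gen ^ p = algebraMap K ↥K⟮x⟯ A := by
      apply (algebraMap ↥K⟮x⟯ E).injective
      rw [map_pow, AdjoinSimple.algebraMap_gen, hxp, ← IsScalarTower.algebraMap_apply]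
    have hB0 : algebraMap K ↥K⟮x⟯ A ≠ 0 := fun h => hA ((_root_.map_eq_zero _).mp h)
    have hgen0 : gen ≠ 0 := fun h0 => hB0 (by rw [← hgenp, h0]; exact zero_pow hp.ne_zero)
    have hBord : orderOf (algebraMap K ↥K⟮x⟯ A) = e :=
      (orderOf_injective (algebraMap K ↥K⟮x⟯).toMonoidHom
        (algebraMap K ↥K⟮x⟯).injective A).trans he.symm
    set u := Units.mk0 gen hgen0 with hu
    have hugen : orderOf gen = orderOf u := by rw [hu, ← orderOf_units, Units.val_mk0]
    have hford : orderOf gen = p * e := by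
      have hu_pow : orderOf (u ^ p) = e := by
        have hval : ((u ^ p : (↥K⟮x⟯)ˣ) : ↥K⟮x⟯) = algebraMap K ↥K⟮x⟯ A := by
          rw [Units.val_pow_eq_pow_val, hu, Units.val_mk0, hgenp]
        rw [← orderOf_units, hval, hBord]
      set f := orderOf u with hf
      have h1 : orderOf (u ^ p) = f / f.gcd p := orderOf_pow u
      have h2 : e * f.gcd p = f := by
        rw [← hu_pow, h1]
        exact Nat.div_mul_cancel (Nat.gcd_dvd_left f p)
      rcases hp.eq_one_or_self_of_dvd (f.gcd p) (Nat.gcd_dvd_right f p) with hg1 | hgp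
      · exfalso
        rw [hg1, mul_one] at h2
        have hpf : p ∣ f := h2 ▸ hpe
        have hgcd : f.gcd p = p := Nat.gcd_eq_right hpf
        rw [hg1] at hgcd
        exact hp.ne_one hgcd.symm
      · rw [hugen, ← h2, hgp, mul_comm]
    have hcard : Fintype.card ↥K⟮x⟯ = q ^ p := by
      rw [Module.card_eq_pow_finrank (K := K) (V := ↥K⟮x⟯), adjoin.finrank hxint, hx,
        natDegree_X_pow_sub_C]
    have hpe_dvd : p * e ∣ q ^ p - 1 := by
      have h0 := orderOf_dvd_card_sub_one hgen0
      rwa [hford, hcard] at h0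
    have hcop' : Nat.Coprime s ((Fintype.card ↥K⟮x⟯ - 1) / orderOf gen) := by
      rw [hford, hcard]
      by_contra hc
      obtain ⟨ℓ, hℓ, hdvd⟩ := Nat.exists_prime_and_dvd hc
      have hls : ℓ ∣ s := hdvd.trans (Nat.gcd_dvd_left _ _)
      have hlq : ℓ ∣ (q ^ p - 1) / (p * e) := hdvd.trans (Nat.gcd_dvd_right _ _)
      have hlt : ℓ ∣ p * s := hls.mul_left p
      have hle : ℓ ∣ e := hprimes ℓ hℓ hlt
      have hlm : ¬ ℓ ∣ m := hnotdvd ℓ hℓ hlt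
      refine key_not_dvd hqpos hℓ hp hm hle hlm hpe_dvd ?_ hlq
      intro hlp hp2
      apply h4
      subst hp2
      rw [hlp] at hls
      obtain ⟨k, hk⟩ := hls
      exact ⟨k, by rw [hk]; ring⟩
    have hprimes' : ∀ ℓ : ℕ, ℓ.Prime → ℓ ∣ s → ℓ ∣ orderOf gen := by
      intro ℓ hℓ hdvd
      rw [hford]
      exact (hprimes ℓ hℓ (hdvd.mul_left p)).mul_left p
    have h4' : 4 ∣ s → 4 ∣ Fintype.card ↥K⟮x⟯ - 1 := by
      intro h4s
      rw [hcard]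
      have h41 : 4 ∣ q - 1 := h4 (h4s.mul_left p)
      have h42 : q - 1 ∣ q ^ p - 1 := by
        have := Nat.sub_dvd_pow_sub_pow q 1 p
        rwa [one_pow] at this
      exact h41.trans h42
    exact IH ↥K⟮x⟯ gen hgen0 hs1 hcop' hprimes' h4'

end Backward

/-- Binomial irreducibility criterion: for `A ∈ F_q^*` of multiplicative order `e` and
`t ≥ 1`, the polynomial `x^t - A` is irreducible over `F_q` iff `gcd(t, (q-1)/e) = 1`,
every prime factor of `t` divides `e`, and `4 ∣ t → 4 ∣ q - 1`. -/
theorem stmt_14 (K : Type) [Field K] [Fintype K] (q : ℕ) (hq : Fintype.card K = q)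
    (A : K) (hA : A ≠ 0) (e t : ℕ) (he : orderOf A = e) (ht : 1 ≤ t) :
    Irreducible ((X : Polynomial K) ^ t - C A) ↔
      (Nat.Coprime t ((q - 1) / e) ∧ (∀ ℓ : ℕ, ℓ.Prime → ℓ ∣ t → ℓ ∣ e) ∧
        (4 ∣ t → 4 ∣ q - 1)) := by
  subst hq he
  constructor
  · exact forward_conditions hA ht
  · rintro ⟨h1, h2, h3⟩
    exact backward_irreducible t K A hA ht h1 h2 h3
end
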